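/- Let W₁, W₂, ... be i.i.d. integer-valued random variables with P(W₁ ≤ 1) = 1, E[W₁] = m ≥ 0 and q := P(W₁ = 1) > 0, and let Sₙ := W₁ + ... + Wₙ. Then P(Sₙ ≥ 0 for all n ∈ ℕ) = m/q. -/

import Mathlib

open Finset Filter

/-- Pathwise identity: for an integer walk with steps ≤ 1, the running maximum equals the
number of times the walk is at a weak record and then steps up by 1. -/
lemma walk_max_eq_card (s : ℕ → ℤ) (h0 : s 0 = 0) (hstep : ∀ k, s (k + 1) ≤ s k + 1) :
    ∀ N : ℕ, (range (N + 1)).sup' nonempty_range_add_one s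
      = ∑ n ∈ range N, if (∀ k ≤ n, s k ≤ s n) ∧ s (n + 1) = s n + 1 then (1 : ℤ) else 0 := by
  intro N
  induction N with
  | zero => simp [h0]
  | succ N ih =>
    set M := (range (N + 1)).sup' nonempty_range_add_one s with hM
    have hle0 : ∀ k ≤ N, s k ≤ M := fun k hk =>
      le_sup' s (mem_range.mpr (Nat.lt_succ_of_le hk))
    have hsup : (range (N + 1 + 1)).sup' nonempty_range_add_one s = s (N + 1) ⊔ M := by
      apply le_antisymm
      · apply sup'_le
        intro k hk
        rcases Nat.lt_succ_iff_lt_or_eq.mp (mem_range.mp hk) with hk' | rfl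
        · exact le_trans (hle0 k (Nat.lt_succ_iff.mp hk')) le_sup_right
        · exact le_sup_left
      · apply sup_le
        · exact le_sup' s (mem_range.mpr (by omega))
        · apply sup'_le
          intro k hk
          have hk' := mem_range.mp hk
          exact le_sup' s (mem_range.mpr (by omega))
    have hle : ∀ k ≤ N, s k ≤ M := fun k hk =>
      le_sup' s (mem_range.mpr (Nat.lt_succ_of_le hk))
    rw [Finset.sum_range_succ, ← ih, hsup]
    by_cases hrec : (∀ k ≤ N, s k ≤ s N) ∧ s (N + 1) = s N + 1
    · have hsN : M = s N :=
        le_antisymm (sup'_le _ _ fun k hk => hrec.1 k (Nat.lt_succ_iff.mp (mem_range.mp hk)))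
          (hle N le_rfl)
      rw [if_pos hrec, hrec.2, ← hsN]
      rw [sup_eq_left.mpr (by omega)]
    · rw [if_neg hrec, add_zero]
      have hup : s (N + 1) ≤ M := by
        by_cases hall : ∀ k ≤ N, s k ≤ s N
        · have h1 : s (N + 1) ≠ s N + 1 := fun h => hrec ⟨hall, h⟩
          have h2 := hstep N
          exact le_trans (by omega) (hle N le_rfl)
        · push_neg at hall
          obtain ⟨k, hk, hks⟩ := hall
          have h2 := hstep N
          exact le_trans (by omega : s (N + 1) ≤ s k) (hle k hk)
      exact sup_eq_right.mpr hup

lemma max_div_tendsto (u : ℕ → ℤ) (h0 : u 0 = 0) {m : ℝ} (hm0 : 0 ≤ m)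
    (h : Tendsto (fun n => (u n : ℝ) / n) atTop (nhds m)) :
    Tendsto (fun N : ℕ => (((range (N + 1)).sup' nonempty_range_add_one u : ℤ) : ℝ) / N)
      atTop (nhds m) := by
  have hcast : ∀ N : ℕ, (((range (N + 1)).sup' nonempty_range_add_one u : ℤ) : ℝ)
      = (range (N + 1)).sup' nonempty_range_add_one (fun k => (u k : ℝ)) := by
    intro N
    exact Finset.comp_sup'_eq_sup'_comp _ (Int.cast : ℤ → ℝ) (fun x y => Int.cast_max)
  rw [Metric.tendsto_atTop] at h ⊢
  intro ε hε
  obtain ⟨K, hK⟩ := h (ε / 2) (by positivity)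
  set δ := ε / 2 with hδ
  have hδpos : 0 < δ := by positivity
  have hmδ : 0 < m + δ := by linarith
  set C : ℝ := ∑ k ∈ range (K + 1), |(u k : ℝ)| with hC
  obtain ⟨N₁, hN₁⟩ := exists_nat_ge (C / (m + δ))
  refine ⟨max (max K N₁) 1, fun N hN => ?_⟩
  have hNK : K ≤ N := le_trans (le_trans (le_max_left _ _) (le_max_left _ _)) hN
  have hNN₁ : N₁ ≤ N := le_trans (le_trans (le_max_right _ _) (le_max_left _ _)) hN
  have hN1 : 1 ≤ N := le_trans (le_max_right _ _) hN
  have hNpos : (0 : ℝ) < N := by exact_mod_cast hN1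
  have hup : ∀ k ≤ N, (u k : ℝ) ≤ (m + δ) * N := by
    intro k hk
    rcases lt_or_ge k K with hkK | hkK
    · have h1 : (u k : ℝ) ≤ C := by
        refine le_trans (le_abs_self _) ?_
        exact Finset.single_le_sum (f := fun k => |(u k : ℝ)|) (fun i _ => abs_nonneg _)
          (mem_range.mpr (by omega))
      have h2 : C ≤ (m + δ) * N := by
        rw [div_le_iff₀ hmδ] at hN₁
        calc C ≤ N₁ * (m + δ) := hN₁
          _ ≤ N * (m + δ) := by
              apply mul_le_mul_of_nonneg_right _ hmδ.le; exact_mod_cast hNN₁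
          _ = (m + δ) * N := mul_comm _ _
      linarith
    · rcases Nat.eq_zero_or_pos k with rfl | hkpos
      · rw [h0]; push_cast; positivity
      · have hkR : (0 : ℝ) < k := by exact_mod_cast hkpos
        have h3 : (u k : ℝ) / k < m + δ := by
          have h4 := hK k hkK
          rw [Real.dist_eq, abs_lt] at h4
          linarith [h4.2]
        have h4 : (u k : ℝ) < (m + δ) * k := by
          rw [div_lt_iff₀ hkR] at h3; linarith
        have h5 : (m + δ) * k ≤ (m + δ) * N := by
          apply mul_le_mul_of_nonneg_left _ hmδ.le; exact_mod_cast hk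
        linarith
  have hupS : (((range (N + 1)).sup' nonempty_range_add_one u : ℤ) : ℝ) ≤ (m + δ) * N := by
    rw [hcast]
    exact Finset.sup'_le _ _ fun k hk => hup k (Nat.lt_succ_iff.mp (mem_range.mp hk))
  have hlowS : (m - δ) * N ≤ (((range (N + 1)).sup' nonempty_range_add_one u : ℤ) : ℝ) := by
    have h4 := hK N hNK
    rw [Real.dist_eq, abs_lt] at h4
    have h5 : (m - δ) * N ≤ (u N : ℝ) := by
      have h6 : m - δ < (u N : ℝ) / N := by linarith [h4.1]
      rw [lt_div_iff₀ hNpos] at h6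
      linarith
    refine le_trans h5 ?_
    rw [hcast]
    exact Finset.le_sup' (fun k => ((u k : ℤ) : ℝ)) (mem_range.mpr (by omega))
  rw [Real.dist_eq, abs_lt]
  constructor
  · have := (le_div_iff₀ hNpos).mpr (by linarith [hlowS] : (m - δ) * N ≤ _)
    -- m - δ ≤ sup'/N
    have h7 : m - δ ≤ (((range (N + 1)).sup' nonempty_range_add_one u : ℤ) : ℝ) / N :=
      (le_div_iff₀ hNpos).mpr (by linarith [hlowS])
    linarith
  · have h8 : (((range (N + 1)).sup' nonempty_range_add_one u : ℤ) : ℝ) / N ≤ m + δ :=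
      (div_le_iff₀ hNpos).mpr (by linarith [hupS])
    linarith

open MeasureTheory ProbabilityTheory

lemma int_set_measurable' (s : Set ℤ) : MeasurableSet s := (Set.to_countable s).measurableSet

lemma pi_int_set_measurable' {n : ℕ} (s : Set (Fin n → ℤ)) : MeasurableSet s :=
  (Set.to_countable s).measurableSet

lemma map_tuple_eq_pi' {Ω : Type*} [MeasurableSpace Ω] {P : Measure Ω} [IsProbabilityMeasure P]
    {W : ℕ → Ω → ℤ} (hmeas : ∀ i, Measurable (W i))
    (hindep : iIndepFun W P)
    (hident : ∀ i, Measure.map (W i) P = Measure.map (W 0) P)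
    {n : ℕ} (g : Fin n → ℕ) (hg : Function.Injective g) :
    Measure.map (fun ω (i : Fin n) => W (g i) ω) P
      = Measure.pi (fun _ : Fin n => Measure.map (W 0) P) := by
  haveI : IsProbabilityMeasure (Measure.map (W 0) P) :=
    Measure.isProbabilityMeasure_map (hmeas 0).aemeasurable
  symm
  apply Measure.pi_eq
  intro s hs
  have hT : Measurable (fun ω (i : Fin n) => W (g i) ω) :=
    measurable_pi_lambda _ fun i => hmeas (g i)
  rw [Measure.map_apply hT (MeasurableSet.univ_pi hs)]
  have hpre : (fun ω (i : Fin n) => W (g i) ω) ⁻¹' (Set.univ.pi s)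
      = ⋂ i : Fin n, W (g i) ⁻¹' s i := by
    ext ω; simp [Set.mem_pi]
  rw [hpre]
  have hmapeval : ∀ j (A : Set ℤ), P (W j ⁻¹' A) = (Measure.map (W 0) P) A := by
    intro j A
    rw [← hident j, Measure.map_apply (hmeas j) (int_set_measurable' A)]
  rcases Nat.eq_zero_or_pos n with rfl | hn
  · simp
  haveI : Nonempty (Fin n) := ⟨⟨0, hn⟩⟩
  classical
  set f := Function.invFun g with hf
  have hfg : ∀ i, f (g i) = i := fun i => Function.leftInverse_invFun hg i
  have h1 : (⋂ i : Fin n, W (g i) ⁻¹' s i)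
      = ⋂ j ∈ Finset.image g Finset.univ, W j ⁻¹' s (f j) := by
    rw [Finset.set_biInter_finset_image]
    ext ω
    simp only [Set.mem_iInter, Finset.mem_univ, Set.mem_preimage, forall_const]
    constructor
    · intro h i; rw [hfg]; exact h i
    · intro h i; have := h i; rwa [hfg] at this
  rw [h1]
  rw [hindep.measure_inter_preimage_eq_mul (Finset.image g Finset.univ)
    (sets := fun j => s (f j)) (fun i _ => int_set_measurable' _)]
  rw [Finset.prod_image (fun i _ j _ h => hg h)]
  exact Finset.prod_congr rfl (fun i _ => by rw [hfg, hmapeval (g i) (s i)])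

lemma sum_ite_Ico (k n : ℕ) (f : ℕ → ℤ) :
    ∑ i ∈ Finset.range n, (if k ≤ i then f i else 0) = ∑ i ∈ Finset.Ico k n, f i := by
  rw [← Finset.sum_filter]
  congr 1
  ext i
  simp only [Finset.mem_filter, Finset.mem_Ico, Finset.mem_range]
  omega

lemma rev_eq {Ω : Type*} [MeasurableSpace Ω] {P : Measure Ω} [IsProbabilityMeasure P]
    {W : ℕ → Ω → ℤ} (hmeas : ∀ i, Measurable (W i))
    (hindep : iIndepFun W P)
    (hident : ∀ i, Measure.map (W i) P = Measure.map (W 0) P) (n : ℕ) :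
    P {ω | ∀ k, k < n → 0 ≤ ∑ i ∈ Finset.Ico k n, W i ω}
      = P {ω | ∀ k, 1 ≤ k → k ≤ n → 0 ≤ ∑ i ∈ Finset.range k, W i ω} := by
  classical
  set B : Set (Fin n → ℤ) :=
    {x | ∀ k, k < n → 0 ≤ ∑ i : Fin n, if k ≤ (i : ℕ) then x i else 0} with hB
  have hg1 : Function.Injective (fun i : Fin n => (i : ℕ)) := Fin.val_injective
  have hg2 : Function.Injective (fun i : Fin n => n - 1 - (i : ℕ)) := by
    intro i j h
    have hi := i.isLt; have hj := j.isLt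
    simp only at h
    exact Fin.ext (by omega)
  have hT1 : Measurable (fun ω (i : Fin n) => W ((i : ℕ)) ω) :=
    measurable_pi_lambda _ fun i => hmeas _
  have hT2 : Measurable (fun ω (i : Fin n) => W (n - 1 - (i : ℕ)) ω) :=
    measurable_pi_lambda _ fun i => hmeas _
  have hpre1 : (fun ω (i : Fin n) => W ((i : ℕ)) ω) ⁻¹' B
      = {ω | ∀ k, k < n → 0 ≤ ∑ i ∈ Finset.Ico k n, W i ω} := by
    ext ω
    simp only [Set.mem_preimage, hB, Set.mem_setOf_eq]
    refine forall₂_congr fun k hk => ?_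
    rw [Fin.sum_univ_eq_sum_range (fun i => if k ≤ i then W i ω else 0) n, sum_ite_Ico]
  have hrevsum : ∀ k, k < n → ∀ ω,
      (∑ i ∈ Finset.Ico k n, W (n - 1 - i) ω) = ∑ j ∈ Finset.range (n - k), W j ω := by
    intro k hk ω
    refine Finset.sum_nbij' (fun i => n - 1 - i) (fun j => n - 1 - j) ?_ ?_ ?_ ?_ ?_
    · intro a ha; simp only [Finset.mem_Ico, Finset.mem_range] at ha ⊢; omega
    · intro a ha; simp only [Finset.mem_Ico, Finset.mem_range] at ha ⊢; omega
    · intro a ha; simp only [Finset.mem_Ico] at ha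
      show n - 1 - (n - 1 - a) = a; omega
    · intro a ha; simp only [Finset.mem_range] at ha
      show n - 1 - (n - 1 - a) = a; omega
    · intro a ha; rfl
  have hpre2 : (fun ω (i : Fin n) => W (n - 1 - (i : ℕ)) ω) ⁻¹' B
      = {ω | ∀ k, 1 ≤ k → k ≤ n → 0 ≤ ∑ i ∈ Finset.range k, W i ω} := by
    ext ω
    simp only [Set.mem_preimage, hB, Set.mem_setOf_eq]
    constructor
    · intro h k hk1 hkn
      have h2 := h (n - k) (by omega)
      rw [Fin.sum_univ_eq_sum_range (fun i => if n - k ≤ i then W (n - 1 - i) ω else 0) n,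
        sum_ite_Ico, hrevsum (n - k) (by omega)] at h2
      have h3 : n - (n - k) = k := by omega
      rwa [h3] at h2
    · intro h k hk
      rw [Fin.sum_univ_eq_sum_range (fun i => if k ≤ i then W (n - 1 - i) ω else 0) n,
        sum_ite_Ico, hrevsum k hk]
      exact h (n - k) (by omega) (by omega)
  calc P {ω | ∀ k, k < n → 0 ≤ ∑ i ∈ Finset.Ico k n, W i ω}
      = Measure.map (fun ω (i : Fin n) => W ((i : ℕ)) ω) P B := by
        rw [Measure.map_apply hT1 (pi_int_set_measurable' B), hpre1]
    _ = Measure.map (fun ω (i : Fin n) => W (n - 1 - (i : ℕ)) ω) P B := by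
        rw [map_tuple_eq_pi' hmeas hindep hident _ hg1,
          map_tuple_eq_pi' hmeas hindep hident _ hg2]
    _ = P {ω | ∀ k, 1 ≤ k → k ≤ n → 0 ≤ ∑ i ∈ Finset.range k, W i ω} := by
        rw [Measure.map_apply hT2 (pi_int_set_measurable' B), hpre2]

lemma indep_step {Ω : Type*} [MeasurableSpace Ω] {P : Measure Ω} [IsProbabilityMeasure P]
    {W : ℕ → Ω → ℤ} (hmeas : ∀ i, Measurable (W i))
    (hindep : iIndepFun W P) (n : ℕ) :
    P ({ω | ∀ k, k < n → 0 ≤ ∑ i ∈ Finset.Ico k n, W i ω} ∩ {ω | W n ω = 1})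
      = P {ω | ∀ k, k < n → 0 ≤ ∑ i ∈ Finset.Ico k n, W i ω} * P {ω | W n ω = 1} := by
  classical
  set B : Set (Fin n → ℤ) :=
    {x | ∀ k, k < n → 0 ≤ ∑ i : Fin n, if k ≤ (i : ℕ) then x i else 0} with hB
  have hdisj : Disjoint (Finset.range n) ({n} : Finset ℕ) := by simp
  have h1 := hindep.indepFun_finset (Finset.range n) {n} hdisj hmeas
  have hφ : Measurable (fun (x : ↥(Finset.range n) → ℤ) (i : Fin n) =>
      x ⟨(i : ℕ), Finset.mem_range.mpr i.isLt⟩) :=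
    measurable_pi_lambda _ fun i => measurable_pi_apply _
  have hψ : Measurable (fun (x : ↥({n} : Finset ℕ) → ℤ) =>
      x ⟨n, Finset.mem_singleton_self n⟩) := measurable_pi_apply _
  have h2 := h1.comp hφ hψ
  have h3 := (ProbabilityTheory.indepFun_iff_measure_inter_preimage_eq_mul.mp h2) B {1}
    (pi_int_set_measurable' B) (int_set_measurable' {1})
  have hpre1 : ((fun (x : ↥(Finset.range n) → ℤ) (i : Fin n) =>
        x ⟨(i : ℕ), Finset.mem_range.mpr i.isLt⟩)
          ∘ (fun a (i : ↥(Finset.range n)) => W (i : ℕ) a)) ⁻¹' B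
      = {ω | ∀ k, k < n → 0 ≤ ∑ i ∈ Finset.Ico k n, W i ω} := by
    ext ω
    simp only [Set.mem_preimage, hB, Set.mem_setOf_eq, Function.comp_apply]
    refine forall₂_congr fun k hk => ?_
    rw [Fin.sum_univ_eq_sum_range (fun i => if k ≤ i then W i ω else 0) n, sum_ite_Ico]
  have hpre2 : ((fun (x : ↥({n} : Finset ℕ) → ℤ) => x ⟨n, Finset.mem_singleton_self n⟩)
        ∘ (fun a (i : ↥({n} : Finset ℕ)) => W (i : ℕ) a)) ⁻¹' ({1} : Set ℤ)
      = {ω | W n ω = 1} := by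
    ext ω
    simp [Function.comp_apply]
  rwa [hpre1, hpre2] at h3

open Filter Finset in
lemma pathwise_count (W' : ℕ → ℤ) (hle : ∀ i, W' i ≤ 1) (N : ℕ) :
    (range (N + 1)).sup' nonempty_range_add_one (fun k => ∑ i ∈ range k, W' i)
      = ∑ n ∈ range N,
          if ((∀ k, k < n → 0 ≤ ∑ i ∈ Finset.Ico k n, W' i) ∧ W' n = 1) then (1 : ℤ) else 0 := by
  have hs0 : (fun k => ∑ i ∈ range k, W' i) 0 = 0 := by simp
  have hstep : ∀ k, (fun k => ∑ i ∈ range k, W' i) (k + 1) ≤ (fun k => ∑ i ∈ range k, W' i) k + 1 := by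
    intro k
    simp only
    rw [Finset.sum_range_succ]
    have := hle k
    omega
  rw [walk_max_eq_card (fun k => ∑ i ∈ range k, W' i) hs0 hstep N]
  refine Finset.sum_congr rfl fun n hn => ?_
  refine if_congr ?_ rfl rfl
  constructor
  · rintro ⟨hrec, h1⟩
    have h2 : ∑ i ∈ range (n + 1), W' i = ∑ i ∈ range n, W' i + W' n := Finset.sum_range_succ _ _
    refine ⟨fun k hk => ?_, by omega⟩
    rw [Finset.sum_Ico_eq_sub _ hk.le]
    have := hrec k hk.le
    omega
  · rintro ⟨hC, hW⟩
    have h2 : ∑ i ∈ range (n + 1), W' i = ∑ i ∈ range n, W' i + W' n := Finset.sum_range_succ _ _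
    constructor
    · intro k hk
      rcases eq_or_lt_of_le hk with rfl | hk'
      · exact le_rfl
      · have h3 := hC k hk'
        rw [Finset.sum_Ico_eq_sub _ hk'.le] at h3
        omega
    · omega

open Filter Finset in
lemma pathwise_tendsto (W' : ℕ → ℤ) (hle : ∀ i, W' i ≤ 1) {m : ℝ} (hm0 : 0 ≤ m)
    (h : Tendsto (fun n : ℕ => ((∑ i ∈ range n, W' i : ℤ) : ℝ) / n) atTop (nhds m)) :
    Tendsto (fun N : ℕ => ((∑ n ∈ range N,
        if ((∀ k, k < n → 0 ≤ ∑ i ∈ Finset.Ico k n, W' i) ∧ W' n = 1) then (1 : ℤ) else 0 : ℤ) : ℝ) / N)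
      atTop (nhds m) := by
  have h0 : (fun k => ∑ i ∈ range k, W' i) 0 = 0 := by simp
  have hmain := max_div_tendsto (fun k => ∑ i ∈ range k, W' i) h0 hm0 h
  refine hmain.congr fun N => ?_
  rw [pathwise_count W' hle N]

/-- For i.i.d. integer-valued W₁, W₂, ... with W₁ ≤ 1 a.s., mean
m = E[W₁] ≥ 0 and q = P(W₁ = 1) > 0, the probability that all partial sums
Sₙ = W₁ + ... + Wₙ are nonnegative equals m/q. -/
theorem skip_free_walk_stays_nonneg
    {Ω : Type*} [MeasurableSpace Ω] (P : Measure Ω) [IsProbabilityMeasure P]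
    (W : ℕ → Ω → ℤ) (hmeas : ∀ i, Measurable (W i))
    (hindep : iIndepFun W P)
    (hident : ∀ i, Measure.map (W i) P = Measure.map (W 0) P)
    (hle : ∀ i, ∀ᵐ ω ∂P, W i ω ≤ 1)
    (hint : Integrable (fun ω => (W 0 ω : ℝ)) P)
    (m : ℝ) (hm : m = ∫ ω, (W 0 ω : ℝ) ∂P) (hm0 : 0 ≤ m)
    (q : ℝ) (hq : q = (P {ω | W 0 ω = 1}).toReal) (hq0 : 0 < q) :
    P {ω | ∀ n : ℕ, 1 ≤ n → 0 ≤ ∑ i ∈ Finset.range n, W i ω} = ENNReal.ofReal (m / q) := by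
  classical
  -- measurability of the basic events
  have hCmeas : ∀ n : ℕ, MeasurableSet {ω | ∀ k, k < n → 0 ≤ ∑ i ∈ Finset.Ico k n, W i ω} := by
    intro n
    have h1 : {ω | ∀ k, k < n → 0 ≤ ∑ i ∈ Finset.Ico k n, W i ω}
        = ⋂ k ∈ Set.Iio n, (fun ω => ∑ i ∈ Finset.Ico k n, W i ω) ⁻¹' {x : ℤ | 0 ≤ x} := by
      ext ω; simp
    rw [h1]
    exact MeasurableSet.biInter (Set.to_countable _) fun k _ =>
      (Finset.measurable_sum _ fun i _ => hmeas i) (int_set_measurable' _)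
  have hAmeas : ∀ n : ℕ,
      MeasurableSet {ω | ∀ k, 1 ≤ k → k ≤ n → 0 ≤ ∑ i ∈ Finset.range k, W i ω} := by
    intro n
    have h1 : {ω | ∀ k, 1 ≤ k → k ≤ n → 0 ≤ ∑ i ∈ Finset.range k, W i ω}
        = ⋂ k ∈ Set.Icc 1 n, (fun ω => ∑ i ∈ Finset.range k, W i ω) ⁻¹' {x : ℤ | 0 ≤ x} := by
      ext ω; simp [Set.mem_Icc]
    rw [h1]
    exact MeasurableSet.biInter (Set.to_countable _) fun k _ =>
      (Finset.measurable_sum _ fun i _ => hmeas i) (int_set_measurable' _)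
  have hW1meas : ∀ n : ℕ, MeasurableSet {ω | W n ω = 1} := fun n =>
    (hmeas n) (int_set_measurable' {1})
  have hDmeas : ∀ n : ℕ, MeasurableSet
      ({ω | ∀ k, k < n → 0 ≤ ∑ i ∈ Finset.Ico k n, W i ω} ∩ {ω | W n ω = 1}) :=
    fun n => (hCmeas n).inter (hW1meas n)
  set a : ℕ → ℝ :=
    fun n => (P {ω | ∀ k, 1 ≤ k → k ≤ n → 0 ≤ ∑ i ∈ Finset.range k, W i ω}).toReal with ha
  -- probability of an upward step
  have hqn : ∀ n : ℕ, (P {ω | W n ω = 1}).toReal = q := by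
    intro n
    have h2 : ∀ j : ℕ, P {ω | W j ω = 1} = Measure.map (W j) P {1} := by
      intro j
      rw [Measure.map_apply (hmeas j) (int_set_measurable' {1})]
      rfl
    have h1 : P {ω | W n ω = 1} = P {ω | W 0 ω = 1} := by
      rw [h2 n, h2 0, hident n]
    rw [h1, hq]
  have hPD : ∀ n : ℕ,
      (P ({ω | ∀ k, k < n → 0 ≤ ∑ i ∈ Finset.Ico k n, W i ω} ∩ {ω | W n ω = 1})).toReal
        = q * a n := by
    intro n
    rw [indep_step hmeas hindep n, ENNReal.toReal_mul, hqn n,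
      rev_eq hmeas hindep hident n]
    simp only [ha]
    exact mul_comm _ _
  -- the counting functional
  set G : ℕ → Ω → ℝ := fun N ω => ∑ n ∈ Finset.range N,
    if ω ∈ ({ω | ∀ k, k < n → 0 ≤ ∑ i ∈ Finset.Ico k n, W i ω} ∩ {ω | W n ω = 1})
    then (1 : ℝ) else 0 with hG
  have hGind : ∀ n : ℕ, (fun ω => if ω ∈
        ({ω | ∀ k, k < n → 0 ≤ ∑ i ∈ Finset.Ico k n, W i ω} ∩ {ω | W n ω = 1})
        then (1 : ℝ) else 0)
      = Set.indicator ({ω | ∀ k, k < n → 0 ≤ ∑ i ∈ Finset.Ico k n, W i ω} ∩ {ω | W n ω = 1})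
          (fun _ => (1 : ℝ)) := by
    intro n; funext ω; rw [Set.indicator_apply]
  have hGmeas : ∀ N, Measurable (G N) := by
    intro N
    simp only [hG]
    exact Finset.measurable_sum _ fun n _ =>
      Measurable.ite (hDmeas n) measurable_const measurable_const
  have hGint : ∀ N, ∫ ω, G N ω ∂P = q * ∑ n ∈ Finset.range N, a n := by
    intro N
    have h2 : ∫ ω, G N ω ∂P = ∑ n ∈ Finset.range N,
        (P ({ω | ∀ k, k < n → 0 ≤ ∑ i ∈ Finset.Ico k n, W i ω} ∩ {ω | W n ω = 1})).toReal := by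
      simp only [hG]
      rw [integral_finset_sum]
      · refine Finset.sum_congr rfl fun n _ => ?_
        rw [hGind n, integral_indicator_const (1 : ℝ) (hDmeas n), smul_eq_mul, mul_one, measureReal_def]
      · intro n _
        rw [hGind n]
        exact (integrable_const (1 : ℝ)).indicator (hDmeas n)
    rw [h2, Finset.mul_sum]
    exact Finset.sum_congr rfl fun n _ => hPD n
  -- strong law of large numbers
  have hcast : Measurable (fun z : ℤ => (z : ℝ)) := measurable_of_countable _
  have hLLN := strong_law_ae_real (fun i ω => (W i ω : ℝ)) hint
    (fun i j hij => (hindep.indepFun hij).comp hcast hcast)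
    (fun i => IdentDistrib.comp ⟨(hmeas i).aemeasurable, (hmeas 0).aemeasurable, hident i⟩ hcast)
  rw [← hm] at hLLN
  have hgood : ∀ᵐ ω ∂P, ∀ i, W i ω ≤ 1 := ae_all_iff.mpr hle
  have hconv : ∀ᵐ ω ∂P, Filter.Tendsto (fun N : ℕ => G N ω / N) Filter.atTop (nhds m) := by
    filter_upwards [hgood, hLLN] with ω h1 h2
    have h2' : Filter.Tendsto (fun n : ℕ => ((∑ i ∈ Finset.range n, W i ω : ℤ) : ℝ) / n)
        Filter.atTop (nhds m) := by
      refine h2.congr fun n => ?_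
      congr 1
      push_cast
      ring
    have hmain := pathwise_tendsto (fun i => W i ω) h1 hm0 h2'
    refine hmain.congr fun N => ?_
    congr 1
    simp only [hG]
    rw [Int.cast_sum]
    refine Finset.sum_congr rfl fun n _ => ?_
    rw [apply_ite (fun z : ℤ => (z : ℝ))]
    refine if_congr ?_ (by norm_num) (by norm_num)
    simp only [Set.mem_inter_iff, Set.mem_setOf_eq]
  -- dominated convergence
  have hgbound : ∀ N : ℕ, ∀ᵐ ω ∂P, ‖G N ω / N‖ ≤ (1 : ℝ) := by
    intro N
    refine Filter.Eventually.of_forall fun ω => ?_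
    have h0 : 0 ≤ G N ω := by
      simp only [hG]
      exact Finset.sum_nonneg fun n _ => by split_ifs <;> norm_num
    have hNb : G N ω ≤ N := by
      simp only [hG]
      calc (∑ n ∈ Finset.range N,
            if ω ∈ ({ω | ∀ k, k < n → 0 ≤ ∑ i ∈ Finset.Ico k n, W i ω} ∩ {ω | W n ω = 1})
            then (1 : ℝ) else 0)
          ≤ ∑ _n ∈ Finset.range N, (1 : ℝ) :=
            Finset.sum_le_sum fun n _ => by split_ifs <;> norm_num
        _ = N := by simp
    rcases Nat.eq_zero_or_pos N with rfl | hN1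
    · simp only [hG, Finset.range_zero, Finset.sum_empty, Nat.cast_zero, div_zero,
        norm_zero]
      norm_num
    · have hNpos : (0 : ℝ) < N := by exact_mod_cast hN1
      rw [Real.norm_eq_abs, abs_of_nonneg (by positivity)]
      rw [div_le_one hNpos]
      exact hNb
  have hDCT := tendsto_integral_of_dominated_convergence (μ := P)
      (F := fun N ω => G N ω / N) (f := fun _ => m) (bound := fun _ => 1)
      (fun N => ((hGmeas N).div_const _).aestronglyMeasurable) (integrable_const 1)
      hgbound hconv
  rw [integral_const, probReal_univ, one_smul] at hDCT
  have hInt2 : ∀ N : ℕ, ∫ ω, G N ω / N ∂P = q * ((N : ℝ)⁻¹ * ∑ n ∈ Finset.range N, a n) := by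
    intro N
    rw [integral_div, hGint N]
    ring
  -- the limit of the probabilities aₙ
  have hAnti : Antitone (fun n : ℕ =>
      {ω | ∀ k, 1 ≤ k → k ≤ n → 0 ≤ ∑ i ∈ Finset.range k, W i ω}) := by
    intro n1 n2 h12 ω hω k hk1 hk2
    exact hω k hk1 (hk2.trans h12)
  have hiInter : {ω | ∀ n : ℕ, 1 ≤ n → 0 ≤ ∑ i ∈ Finset.range n, W i ω}
      = ⋂ n, {ω | ∀ k, 1 ≤ k → k ≤ n → 0 ≤ ∑ i ∈ Finset.range k, W i ω} := by
    ext ω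
    simp only [Set.mem_setOf_eq, Set.mem_iInter]
    constructor
    · intro h n k hk1 hk2; exact h k hk1
    · intro h n hn; exact h n n hn le_rfl
  have htm := tendsto_measure_iInter_atTop
      (fun n => (hAmeas n).nullMeasurableSet) hAnti ⟨0, measure_ne_top P _⟩
  set L := (P (⋂ n, {ω | ∀ k, 1 ≤ k → k ≤ n → 0 ≤ ∑ i ∈ Finset.range k, W i ω})).toReal
    with hL
  have haL : Filter.Tendsto a Filter.atTop (nhds L) := by
    exact (ENNReal.tendsto_toReal (measure_ne_top P _)).comp htm
  have hces := (haL.cesaro).const_mul q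
  have hq' : Filter.Tendsto (fun N : ℕ => q * ((N : ℝ)⁻¹ * ∑ n ∈ Finset.range N, a n))
      Filter.atTop (nhds m) := hDCT.congr fun N => hInt2 N
  have hql : m = q * L := tendsto_nhds_unique hq' hces
  have hL' : m / q = L := by
    rw [hql, mul_comm, mul_div_assoc, div_self hq0.ne', mul_one]
  rw [hiInter, hL', hL]
  exact (ENNReal.ofReal_toReal (measure_ne_top P _)).symm
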